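/- Let L = (v_1, …, v_s) and suppose each v_i is independently included in a random set Z with probability p_i = min{1, c·ln n/(i·ν)} for parameters c ≥ 12, ν ∈ (0,1), n ≥ 2. Fix j ≤ s and B ⊆ L with {v_1,…,v_{⌊αj⌋}} ⊆ B for some α ≤ 1 − ν, and suppose p_{⌊αj⌋+1} < 1. Then Pr[Z ∩ {v_{⌊αj⌋+1}, …, v_j} = ∅] ≤ n^{−(c/(2ν))·ln(1/α)} ≤ n^{−3}. -/

import Mathlib

open scoped Classical

/-- Inclusion probability of the `i`-th element: `p_i = min{1, c·ln n/(i·ν)}`. -/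
noncomputable def pIncl (c ν : ℝ) (n : ℕ) (i : ℕ) : ℝ :=
  min 1 (c * Real.log n / ((i : ℝ) * ν))

/-- Probability of the outcome `S ⊆ [1..s]` when element `i` is included
independently with probability `pIncl c ν n i`. -/
noncomputable def inclWeight (c ν : ℝ) (n s : ℕ) (S : Finset ℕ) : ℝ :=
  (∏ i ∈ S, pIncl c ν n i) * ∏ i ∈ Finset.Icc 1 s \ S, (1 - pIncl c ν n i)

lemma aux_sum_weights (p : ℕ → ℝ) (Ω T : Finset ℕ) (hT : T ⊆ Ω) :
    (∑ S ∈ Ω.powerset, if S ∩ T = ∅ then (∏ i ∈ S, p i) * ∏ i ∈ Ω \ S, (1 - p i) else 0)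
      = ∏ i ∈ T, (1 - p i) := by
  rw [← Finset.sum_filter]
  have hfil : Ω.powerset.filter (fun S => S ∩ T = ∅) = (Ω \ T).powerset := by
    ext S
    simp only [Finset.mem_filter, Finset.mem_powerset, Finset.subset_sdiff,
      ← Finset.disjoint_iff_inter_eq_empty]
  rw [hfil]
  have hstep : ∀ S ∈ (Ω \ T).powerset,
      (∏ i ∈ S, p i) * ∏ i ∈ Ω \ S, (1 - p i)
        = (∏ i ∈ T, (1 - p i)) * ((∏ i ∈ S, p i) * ∏ i ∈ (Ω \ T) \ S, (1 - p i)) := by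
    intro S hS
    rw [Finset.mem_powerset] at hS
    have hd : Disjoint ((Ω \ T) \ S) T := by
      refine Finset.disjoint_left.2 fun i hi => ?_
      simp only [Finset.mem_sdiff] at hi
      exact hi.1.2
    have hΩ : Ω \ S = ((Ω \ T) \ S) ∪ T := by
      ext i
      simp only [Finset.mem_sdiff, Finset.mem_union]
      constructor
      · intro ⟨h1, h2⟩
        by_cases hiT : i ∈ T
        · exact Or.inr hiT
        · exact Or.inl ⟨⟨h1, hiT⟩, h2⟩
      · rintro (⟨⟨h1, _⟩, h2⟩ | hiT)
        · exact ⟨h1, h2⟩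
        · refine ⟨hT hiT, fun hiS => ?_⟩
          have := hS hiS
          simp only [Finset.mem_sdiff] at this
          exact this.2 hiT
    rw [hΩ, Finset.prod_union hd]
    ring
  rw [Finset.sum_congr rfl hstep, ← Finset.mul_sum, ← Finset.prod_add]
  simp

lemma aux_harmonic (a b : ℕ) (ha : 0 < a) (h : a ≤ b) :
    Real.log (b + 1) - Real.log a ≤ ∑ i ∈ Finset.Icc a b, (1 / (i : ℝ)) := by
  induction b, h using Nat.le_induction with
  | base =>
    rw [Finset.Icc_self, Finset.sum_singleton]
    have h1 : Real.log ((a + 1 : ℝ) / a) ≤ (a+1:ℝ)/a - 1 :=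
      Real.log_le_sub_one_of_pos (by positivity)
    rw [Real.log_div (by positivity) (by positivity)] at h1
    have : ((a:ℝ)+1)/a - 1 = 1/a := by field_simp; ring
    push_cast
    linarith [this ▸ h1]
  | succ b hab ih =>
    rw [Finset.sum_Icc_succ_top (by omega)]
    have h1 : Real.log ((b + 2 : ℝ) / (b+1)) ≤ (b+2:ℝ)/(b+1) - 1 :=
      Real.log_le_sub_one_of_pos (by positivity)
    rw [Real.log_div (by positivity) (by positivity)] at h1
    have h2 : ((b:ℝ)+2)/(b+1) - 1 = 1/(b+1) := by field_simp; norm_num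
    rw [h2] at h1
    push_cast at ih ⊢
    have h3 : ((b:ℝ) + 1 + 1) = (b:ℝ) + 2 := by ring
    rw [h3]
    linarith

set_option maxHeartbeats 1600000 in
/-- If each `v_i` (`1 ≤ i ≤ s`) is sampled with probability `min{1, c·ln n/(i·ν)}`,
`{v_1,…,v_⌊αj⌋} ⊆ B` with `α ≤ 1 − ν`, and `p_{⌊αj⌋+1} < 1`, then
`Pr[Z ∩ {v_{⌊αj⌋+1},…,v_j} = ∅] ≤ n^(−(c/(2ν))·ln(1/α)) ≤ n^(−3)`. -/
theorem stmt_18 (c ν α : ℝ) (n s j : ℕ) (B : Finset ℕ)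
    (hc : 12 ≤ c) (hν0 : 0 < ν) (hν1 : ν < 1) (hn : 2 ≤ n)
    (hα0 : 0 < α) (hα : α ≤ 1 - ν) (hj : j ≤ s)
    (hB1 : Finset.Icc 1 ⌊α * (j : ℝ)⌋₊ ⊆ B) (hB2 : B ⊆ Finset.Icc 1 s)
    (hp : c * Real.log n / ((⌊α * (j : ℝ)⌋₊ + 1 : ℕ) * ν) < 1) :
    (∑ S ∈ (Finset.Icc 1 s).powerset,
        if S ∩ Finset.Icc (⌊α * (j : ℝ)⌋₊ + 1) j = ∅ then inclWeight c ν n s S else 0)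
      ≤ (n : ℝ) ^ (-(c / (2 * ν)) * Real.log (1 / α)) ∧
    (n : ℝ) ^ (-(c / (2 * ν)) * Real.log (1 / α)) ≤ (n : ℝ) ^ (-3 : ℝ) := by
  set m := ⌊α * (j : ℝ)⌋₊ with hm
  have hn1 : (1:ℝ) < n := by exact_mod_cast Nat.lt_of_lt_of_le one_lt_two hn
  have hn0 : (0:ℝ) < n := by linarith
  have hlog2 : (0.6931471803 : ℝ) < Real.log 2 := Real.log_two_gt_d9
  have hlogn : Real.log 2 ≤ Real.log n := Real.log_le_log (by norm_num) (by exact_mod_cast hn)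
  have hL : (0:ℝ) < Real.log n := by linarith
  have hK8 : (8:ℝ) < c * Real.log n := by nlinarith
  have hpc : c * Real.log n < ((m:ℝ) + 1) * ν := by
    have hd : (0:ℝ) < ((m:ℝ) + 1) * ν := by positivity
    exact (div_lt_one hd).mp (by push_cast at hp ⊢; exact hp)
  have hm8 : 8 ≤ m := by
    by_contra hcon
    push_neg at hcon
    have hm7 : (m:ℝ) ≤ 7 := by exact_mod_cast Nat.lt_succ_iff.mp hcon
    nlinarith
  have hαj : (m:ℝ) ≤ α * j := Nat.floor_le (by positivity)
  have hαlt1 : α < 1 := by linarith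
  have hmj : m < j := by
    have h8 : (8:ℝ) ≤ α * j := le_trans (by exact_mod_cast hm8) hαj
    have hj0 : (0:ℝ) < j := by nlinarith
    have : (m:ℝ) < j := by nlinarith
    exact_mod_cast this
  set Ω := Finset.Icc 1 s with hΩ
  set T := Finset.Icc (m + 1) j with hT
  have hTΩ : T ⊆ Ω := by
    intro i hi
    simp only [hT, hΩ, Finset.mem_Icc] at hi ⊢
    omega
  have hpval : ∀ i ∈ T, pIncl c ν n i = c * Real.log n / ((i:ℝ) * ν) := by
    intro i hi
    simp only [hT, Finset.mem_Icc] at hi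
    have hi1 : ((m:ℝ) + 1) ≤ (i:ℝ) := by exact_mod_cast hi.1
    have hlt : c * Real.log n / ((i:ℝ) * ν) < 1 := by
      rw [div_lt_one (by nlinarith)]
      nlinarith
    exact min_eq_right hlt.le
  have hp01 : ∀ i : ℕ, 0 ≤ pIncl c ν n i ∧ pIncl c ν n i ≤ 1 := by
    intro i
    refine ⟨le_min (by norm_num) (by positivity), min_le_left _ _⟩
  -- Step 1: the sum equals the product over T
  have hsum : (∑ S ∈ Ω.powerset, if S ∩ T = ∅ then inclWeight c ν n s S else 0)
      = ∏ i ∈ T, (1 - pIncl c ν n i) := aux_sum_weights _ Ω T hTΩ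
  -- Step 2: product ≤ exp(-sum)
  have hprodexp : (∏ i ∈ T, (1 - pIncl c ν n i)) ≤ Real.exp (-∑ i ∈ T, pIncl c ν n i) := by
    calc (∏ i ∈ T, (1 - pIncl c ν n i)) ≤ ∏ i ∈ T, Real.exp (-pIncl c ν n i) := by
          apply Finset.prod_le_prod
          · intro i _; linarith [(hp01 i).2]
          · intro i _; linarith [Real.add_one_le_exp (-pIncl c ν n i)]
      _ = Real.exp (∑ i ∈ T, -pIncl c ν n i) := (Real.exp_sum _ _).symm
      _ = Real.exp (-∑ i ∈ T, pIncl c ν n i) := by rw [← Finset.sum_neg_distrib]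
  -- Step 3: lower bound the sum of probabilities
  have hsumval : (∑ i ∈ T, pIncl c ν n i)
      = (c * Real.log n / ν) * ∑ i ∈ T, (1 / (i:ℝ)) := by
    rw [Finset.mul_sum, Finset.sum_congr rfl hpval]
    apply Finset.sum_congr rfl
    intro i _
    rw [mul_one_div, div_div, mul_comm ν (i:ℝ)]
  have hharm : Real.log ((j:ℝ) + 1) - Real.log ((m:ℝ) + 1) ≤ ∑ i ∈ T, (1 / (i:ℝ)) := by
    have h := aux_harmonic (m+1) j (by omega) (by omega)
    rw [hT]
    push_cast at h
    exact h
  -- log(j+1) - log(m+1) ≥ (1/2) log (1/α)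
  have hsa : Real.sqrt α * Real.sqrt α = α := Real.mul_self_sqrt hα0.le
  have hsa0 : 0 < Real.sqrt α := Real.sqrt_pos.2 hα0
  have hsa1 : Real.sqrt α < 1 := by nlinarith
  have hkey : ((m:ℝ) + 1) ≤ Real.sqrt α * ((j:ℝ) + 1) := by
    have h8 : (8:ℝ) ≤ α * j := le_trans (by exact_mod_cast hm8) hαj
    have hassoc : Real.sqrt α * (Real.sqrt α * j) = α * j := by rw [← mul_assoc, hsa]
    have hsj : 1 ≤ Real.sqrt α * j := by
      have hnn : 0 ≤ Real.sqrt α * j := mul_nonneg hsa0.le (Nat.cast_nonneg j)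
      have h2 := mul_le_mul_of_nonneg_right hsa1.le hnn
      rw [one_mul, hassoc] at h2
      linarith
    have hP : 0 ≤ (1 - Real.sqrt α) * (Real.sqrt α * j - 1) :=
      mul_nonneg (by linarith) (by linarith)
    nlinarith [hP, hassoc, hαj]
  have hloghalf : Real.log (1/α) / 2 ≤ Real.log ((j:ℝ) + 1) - Real.log ((m:ℝ) + 1) := by
    have h1 : Real.log ((m:ℝ)+1) ≤ Real.log (Real.sqrt α * ((j:ℝ)+1)) :=
      Real.log_le_log (by positivity) hkey
    rw [Real.log_mul (by positivity) (by positivity), Real.log_sqrt hα0.le] at h1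
    rw [one_div, Real.log_inv]
    linarith
  have hlogα : 0 < Real.log (1/α) := by
    rw [one_div, Real.log_inv]
    have := Real.log_neg hα0 hαlt1
    linarith
  have hfinal : (c / (2 * ν)) * Real.log (1/α) * Real.log n ≤ ∑ i ∈ T, pIncl c ν n i := by
    rw [hsumval]
    have h1 : Real.log (1/α) / 2 ≤ ∑ i ∈ T, (1 / (i:ℝ)) := le_trans hloghalf hharm
    have h2 : (0:ℝ) ≤ c * Real.log n / ν := by positivity
    calc (c / (2 * ν)) * Real.log (1/α) * Real.log n
        = (c * Real.log n / ν) * (Real.log (1/α) / 2) := by ring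
      _ ≤ (c * Real.log n / ν) * ∑ i ∈ T, (1 / (i:ℝ)) := by
          exact mul_le_mul_of_nonneg_left h1 h2
  constructor
  · rw [hsum]
    calc (∏ i ∈ T, (1 - pIncl c ν n i)) ≤ Real.exp (-∑ i ∈ T, pIncl c ν n i) := hprodexp
      _ ≤ Real.exp (Real.log n * (-(c / (2 * ν)) * Real.log (1 / α))) := by
          apply Real.exp_le_exp.2
          nlinarith [hfinal]
      _ = (n : ℝ) ^ (-(c / (2 * ν)) * Real.log (1 / α)) := (Real.rpow_def_of_pos hn0 _).symm
  · rw [Real.rpow_le_rpow_left_iff hn1]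
    have hν : ν ≤ Real.log (1/α) := by
      rw [one_div, Real.log_inv]
      have h1 : Real.log α ≤ Real.log (1 - ν) := Real.log_le_log hα0 hα
      have h2 : Real.log (1 - ν) ≤ (1 - ν) - 1 := Real.log_le_sub_one_of_pos (by linarith)
      linarith
    have h3 : 3 ≤ c / (2*ν) * Real.log (1/α) := by
      rw [div_mul_eq_mul_div, le_div_iff₀ (by positivity)]
      nlinarith
    linarith
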